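/- Let R > r > 0 with r·R < 4 + r², and let Φ : ℝ² → ℝ³, Φ(u, v) = (r·sin u, (R + r·cos u)·cos v, (R + r·cos u)·sin v) (the vertical torus). Then ω_{Φ(u,v)}(∂Φ/∂u (u,v)) = 0 and ω_{Φ(u,v)}(∂Φ/∂v (u,v)) = 0 hold simultaneously if and only if sin u = 0 and cos v = 0. Consequently the characteristic points of the vertical torus are exactly the four points (0, 0, R + r), (0, 0, −(R + r)), (0, 0, R − r), (0, 0, −(R − r)). -/

import Mathlib

/-- The Heisenberg contact form at `p`, `ω_p(v) = v₃ + (p₂v₁ − p₁v₂)/2`. -/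
noncomputable def heisenbergForm (p v : ℝ × ℝ × ℝ) : ℝ :=
  v.2.2 + (p.2.1 * v.1 - p.1 * v.2.1) / 2

/-- For the vertical torus `Φ(u,v) = (r sin u, (R + r cos u) cos v, (R + r cos u) sin v)`
with `R > r > 0` and `rR < 4 + r²`, the characteristic condition
`ω(∂Φ/∂u) = ω(∂Φ/∂v) = 0` holds exactly when `sin u = 0` and `cos v = 0`; consequently
the characteristic points are exactly `(0, 0, ±(R + r))` and `(0, 0, ±(R − r))`. -/
theorem vertical_torus_four_characteristic_points
    (r R : ℝ) (hr : 0 < r) (hrR : r < R) (hsmall : r * R < 4 + r ^ 2)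
    (Φ : ℝ → ℝ → ℝ × ℝ × ℝ)
    (hΦ : Φ = fun u v =>
      (r * Real.sin u,
       (R + r * Real.cos u) * Real.cos v,
       (R + r * Real.cos u) * Real.sin v)) :
    (∀ u v : ℝ,
      (heisenbergForm (Φ u v) (deriv (fun s => Φ s v) u) = 0 ∧
       heisenbergForm (Φ u v) (deriv (fun t => Φ u t) v) = 0) ↔
      (Real.sin u = 0 ∧ Real.cos v = 0)) ∧
    {p : ℝ × ℝ × ℝ | ∃ u v : ℝ, p = Φ u v ∧
        heisenbergForm (Φ u v) (deriv (fun s => Φ s v) u) = 0 ∧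
        heisenbergForm (Φ u v) (deriv (fun t => Φ u t) v) = 0} =
      {((0 : ℝ), (0 : ℝ), R + r), ((0 : ℝ), (0 : ℝ), -(R + r)),
       ((0 : ℝ), (0 : ℝ), R - r), ((0 : ℝ), (0 : ℝ), -(R - r))} := by
  subst hΦ
  have hdu : ∀ u v : ℝ, deriv (fun s : ℝ =>
      ((r * Real.sin s, (R + r * Real.cos s) * Real.cos v,
        (R + r * Real.cos s) * Real.sin v) : ℝ × ℝ × ℝ)) u =
      (r * Real.cos u, (r * -Real.sin u) * Real.cos v, (r * -Real.sin u) * Real.sin v) := by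
    intro u v
    have h1 : HasDerivAt (fun s : ℝ => r * Real.sin s) (r * Real.cos u) u :=
      (Real.hasDerivAt_sin u).const_mul r
    have h2 : HasDerivAt (fun s : ℝ => (R + r * Real.cos s) * Real.cos v)
        ((r * -Real.sin u) * Real.cos v) u :=
      (((Real.hasDerivAt_cos u).const_mul r).const_add R).mul_const _
    have h3 : HasDerivAt (fun s : ℝ => (R + r * Real.cos s) * Real.sin v)
        ((r * -Real.sin u) * Real.sin v) u :=
      (((Real.hasDerivAt_cos u).const_mul r).const_add R).mul_const _
    exact (h1.prodMk (h2.prodMk h3)).deriv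
  have hdv : ∀ u v : ℝ, deriv (fun t : ℝ =>
      ((r * Real.sin u, (R + r * Real.cos u) * Real.cos t,
        (R + r * Real.cos u) * Real.sin t) : ℝ × ℝ × ℝ)) v =
      (0, (R + r * Real.cos u) * -Real.sin v, (R + r * Real.cos u) * Real.cos v) := by
    intro u v
    have h1 : HasDerivAt (fun _ : ℝ => r * Real.sin u) (0 : ℝ) v := hasDerivAt_const _ _
    have h2 : HasDerivAt (fun t : ℝ => (R + r * Real.cos u) * Real.cos t)
        ((R + r * Real.cos u) * -Real.sin v) v :=
      (Real.hasDerivAt_cos v).const_mul _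
    have h3 : HasDerivAt (fun t : ℝ => (R + r * Real.cos u) * Real.sin t)
        ((R + r * Real.cos u) * Real.cos v) v :=
      (Real.hasDerivAt_sin v).const_mul _
    exact (h1.prodMk (h2.prodMk h3)).deriv
  have key : ∀ u v : ℝ,
      (heisenbergForm ((fun u v =>
        ((r * Real.sin u, (R + r * Real.cos u) * Real.cos v,
          (R + r * Real.cos u) * Real.sin v) : ℝ × ℝ × ℝ)) u v)
        (deriv (fun s : ℝ =>
          ((r * Real.sin s, (R + r * Real.cos s) * Real.cos v,
            (R + r * Real.cos s) * Real.sin v) : ℝ × ℝ × ℝ)) u) = 0 ∧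
       heisenbergForm ((fun u v =>
        ((r * Real.sin u, (R + r * Real.cos u) * Real.cos v,
          (R + r * Real.cos u) * Real.sin v) : ℝ × ℝ × ℝ)) u v)
        (deriv (fun t : ℝ =>
          ((r * Real.sin u, (R + r * Real.cos u) * Real.cos t,
            (R + r * Real.cos u) * Real.sin t) : ℝ × ℝ × ℝ)) v) = 0) ↔
      (Real.sin u = 0 ∧ Real.cos v = 0) := by
    intro u v
    rw [hdu, hdv]
    simp only [heisenbergForm]
    have hsc : Real.sin u ^ 2 + Real.cos u ^ 2 = 1 := Real.sin_sq_add_cos_sq u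
    have hSC : Real.sin v ^ 2 + Real.cos v ^ 2 = 1 := Real.sin_sq_add_cos_sq v
    have hc1 : -1 ≤ Real.cos u := Real.neg_one_le_cos u
    set s := Real.sin u with hs
    set c := Real.cos u with hc
    set S := Real.sin v with hS
    set C := Real.cos v with hC
    have hρ : 0 < R + r * c := by nlinarith
    have hrRc : -(r * R) ≤ r * R * c := by nlinarith [mul_pos hr (hr.trans hrR)]
    have hpos : 0 < 4 + r ^ 2 + r * R * c := by nlinarith
    constructor
    · rintro ⟨h1, h2⟩
      have h2' : C + r * s * S / 2 = 0 := by
        have hz : (R + r * c) * (C + r * s * S / 2) = 0 := by ring_nf; ring_nf at h2; linarith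
        rcases mul_eq_zero.1 hz with h | h
        · exact absurd h (ne_of_gt hρ)
        · exact h
      have hCval : C = -(r * s * S / 2) := by linarith
      have hkey : s * S * (4 + r ^ 2 + r * R * c) = 0 := by
        rw [hCval] at h1
        have hrX : r * (s * S * (4 + r ^ 2 + r * R * c)) = 0 := by
          linear_combination (-4) * h1 - (r ^ 3 * s * S) * hsc
        rcases mul_eq_zero.1 hrX with h | h
        · exact absurd h (ne_of_gt hr)
        · exact h
      have hsS : s * S = 0 := by
        rcases mul_eq_zero.1 hkey with h | h
        · exact h
        · exact absurd h (ne_of_gt hpos)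
      rcases mul_eq_zero.1 hsS with h | h
      · refine ⟨h, ?_⟩
        rw [h] at hCval; simpa using hCval
      · exfalso
        rw [h] at hCval
        simp at hCval
        rw [h, hCval] at hSC
        norm_num at hSC
    · rintro ⟨h1, h2⟩
      rw [h1, h2]
      constructor <;> ring
  refine ⟨key, ?_⟩
  ext p
  simp only [Set.mem_setOf_eq, Set.mem_insert_iff, Set.mem_singleton_iff]
  constructor
  · rintro ⟨u, v, hp, h1, h2⟩
    obtain ⟨hsu, hcv⟩ := (key u v).1 ⟨h1, h2⟩
    have hcu : Real.cos u = 1 ∨ Real.cos u = -1 := by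
      have h := Real.sin_sq_add_cos_sq u
      rw [hsu] at h
      have h' : (Real.cos u - 1) * (Real.cos u + 1) = 0 := by nlinarith
      rcases mul_eq_zero.1 h' with h'' | h''
      · left; linarith
      · right; linarith
    have hsv : Real.sin v = 1 ∨ Real.sin v = -1 := by
      have h := Real.sin_sq_add_cos_sq v
      rw [hcv] at h
      have h' : (Real.sin v - 1) * (Real.sin v + 1) = 0 := by nlinarith
      rcases mul_eq_zero.1 h' with h'' | h''
      · left; linarith
      · right; linarith
    subst hp
    rcases hcu with hcu | hcu <;> rcases hsv with hsv | hsv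
    · exact Or.inl (by rw [Prod.ext_iff, Prod.ext_iff]; refine ⟨by simp [hsu], by simp [hcv], by rw [hcu, hsv]; ring⟩)
    · exact Or.inr (Or.inl (by rw [Prod.ext_iff, Prod.ext_iff]; refine ⟨by simp [hsu], by simp [hcv], by rw [hcu, hsv]; ring⟩))
    · exact Or.inr (Or.inr (Or.inl (by rw [Prod.ext_iff, Prod.ext_iff]; refine ⟨by simp [hsu], by simp [hcv], by rw [hcu, hsv]; ring⟩)))
    · exact Or.inr (Or.inr (Or.inr (by rw [Prod.ext_iff, Prod.ext_iff]; refine ⟨by simp [hsu], by simp [hcv], by rw [hcu, hsv]; ring⟩)))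
  · intro hp
    rcases hp with hp | hp | hp | hp
    · exact ⟨0, Real.pi / 2, by rw [hp]; norm_num,
        (key 0 (Real.pi/2)).2 ⟨by simp, by simp⟩⟩
    · exact ⟨0, -(Real.pi / 2), by rw [hp]; norm_num,
        (key 0 (-(Real.pi/2))).2 ⟨by simp, by simp⟩⟩
    · exact ⟨Real.pi, Real.pi / 2, by rw [hp]; norm_num [sub_eq_add_neg],
        (key Real.pi (Real.pi/2)).2 ⟨by simp, by simp⟩⟩
    · exact ⟨Real.pi, -(Real.pi / 2), by rw [hp]; norm_num [sub_eq_add_neg],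
        (key Real.pi (-(Real.pi/2))).2 ⟨by simp, by simp⟩⟩
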